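/- arXiv:1803.03282 — 7 statements merged into one kernel-verified Lean document; each statement's English description precedes it below -/
import Mathlib

section
/- Let w be a k-Grassmannian permutation in W_n^{(k)}. Then the length of w equals the sum of the two associated partitions: ℓ(w) = Σ_{i=1}^{k} α_i + Σ_{i=1}^{r} λ_i. -/
/-- The hyperoctahedral group `W_n`: bijections `w : ℤ → ℤ` with `w (-i) = -w i`
and `w i = i` whenever `n < |i|`. -/
def SignedPerm (n : ℕ) (w : ℤ → ℤ) : Prop :=
  Function.Bijective w ∧ (∀ i : ℤ, w (-i) = -w i) ∧ (∀ i : ℤ, (n : ℤ) < |i| → w i = i)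

/-- The number of inversions `#{(i,j) : 1 ≤ i < j ≤ n, w i > w j}`. -/
noncomputable def invCount (n : ℕ) (w : ℤ → ℤ) : ℕ :=
  ((Finset.Icc (1 : ℤ) (n : ℤ) ×ˢ Finset.Icc (1 : ℤ) (n : ℤ)).filter
    (fun p => p.1 < p.2 ∧ w p.2 < w p.1)).card

/-- The length `ℓ(w) = inv(w) - Σ_{1 ≤ j ≤ n, w j < 0} w j`. -/
noncomputable def len (n : ℕ) (w : ℤ → ℤ) : ℤ :=
  (invCount n w : ℤ) - ∑ j ∈ (Finset.Icc (1 : ℤ) (n : ℤ)).filter (fun j => w j < 0), w j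

/-- `w` is `k`-Grassmannian: `0 < w 1 < ⋯ < w k` and `w (k+1) < ⋯ < w n`. -/
def Grassmannian (n k : ℕ) (w : ℤ → ℤ) : Prop :=
  SignedPerm n w ∧
  (∀ i : ℤ, 1 ≤ i → i ≤ (k : ℤ) → 0 < w i) ∧
  (∀ i j : ℤ, 1 ≤ i → i < j → j ≤ (k : ℤ) → w i < w j) ∧
  (∀ i j : ℤ, (k : ℤ) < i → i < j → j ≤ (n : ℤ) → w i < w j)

/-- A reflection of `W_n`: either the transposition pair `(i j)(-i -j)` with
`1 ≤ i < |j| ≤ n`, or the sign change `i ↔ -i` with `1 ≤ i ≤ n`. -/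
def IsReflection (n : ℕ) (t : ℤ → ℤ) : Prop :=
  (∃ i j : ℤ, 1 ≤ i ∧ i < |j| ∧ |j| ≤ (n : ℤ) ∧
    t = fun m => if m = i then j else if m = j then i
      else if m = -i then -j else if m = -j then -i else m) ∨
  (∃ i : ℤ, 1 ≤ i ∧ i ≤ (n : ℤ) ∧
    t = fun m => if m = i then -i else if m = -i then i else m)

/-- `w` covers `w'` in the Bruhat order: `w' = w ∘ t` for a reflection `t` and
`ℓ(w) = ℓ(w') + 1`. -/
def Covers (n : ℕ) (w w' : ℤ → ℤ) : Prop :=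
  ∃ t : ℤ → ℤ, IsReflection n t ∧ w' = w ∘ t ∧ len n w = len n w' + 1

/-- Multiset of entries of `w` at positions `1, …, k`. -/
noncomputable def entriesLow (k : ℕ) (w : ℤ → ℤ) : Multiset ℤ :=
  (Finset.Icc (1 : ℤ) (k : ℤ)).val.map w

/-- Multiset of entries of `w` at positions `k+1, …, n`. -/
noncomputable def entriesHigh (n k : ℕ) (w : ℤ → ℤ) : Multiset ℤ :=
  (Finset.Icc ((k : ℤ) + 1) (n : ℤ)).val.map w

/-- `d_i = #{j : λ_j > u_i}`, the number of negative entries of `w` at positions `> k`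
whose absolute value exceeds `w i`. -/
noncomputable def dcount (n k : ℕ) (w : ℤ → ℤ) (i : ℤ) : ℕ :=
  ((Finset.Icc ((k : ℤ) + 1) (n : ℤ)).filter (fun j => w j < 0 ∧ w i < -(w j))).card

/-- `μ_i = #{j : v_j > u_i}`, the number of positive entries of `w` at positions `> k`
exceeding `w i`. -/
noncomputable def mucount (n k : ℕ) (w : ℤ → ℤ) (i : ℤ) : ℕ :=
  ((Finset.Icc ((k : ℤ) + 1) (n : ℤ)).filter (fun j => 0 < w j ∧ w i < w j)).card

/-- `α_i = u_i - i + d_i`. -/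
noncomputable def alphaPart (n k : ℕ) (w : ℤ → ℤ) (i : ℤ) : ℤ :=
  w i - i + (dcount n k w i : ℤ)

/-- Pair of type B1: `w'` is obtained from `w` by replacing the entry `-1`
(at a position `> k`) by `1`. -/
def TypeB1 (n k : ℕ) (w w' : ℤ → ℤ) : Prop :=
  Grassmannian n k w ∧ Grassmannian n k w' ∧
  (-1 : ℤ) ∈ entriesHigh n k w ∧
  entriesLow k w' = entriesLow k w ∧
  entriesHigh n k w' = 1 ::ₘ (entriesHigh n k w).erase (-1)

/-- Pair of type B2: for some `a > 1`, `w'` is obtained from `w` by replacing the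
entries `-a` and `a-1` (at positions `> k`) by `-(a-1)` and `a`. -/
def TypeB2 (n k : ℕ) (w w' : ℤ → ℤ) : Prop :=
  Grassmannian n k w ∧ Grassmannian n k w' ∧
  ∃ a : ℤ, 1 < a ∧ (-a) ∈ entriesHigh n k w ∧ (a - 1) ∈ entriesHigh n k w ∧
    entriesLow k w' = entriesLow k w ∧
    entriesHigh n k w' =
      a ::ₘ (-(a - 1)) ::ₘ (((entriesHigh n k w).erase (-a)).erase (a - 1))

/-- Pair of type B3: for some `a > x > 0`, `w'` is obtained from `w` by exchanging
the entry `a` (at a position `≤ k`) with the entry `a - x` (at a position `> k`). -/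
def TypeB3 (n k : ℕ) (w w' : ℤ → ℤ) : Prop :=
  Grassmannian n k w ∧ Grassmannian n k w' ∧
  ∃ a x : ℤ, 0 < x ∧ x < a ∧
    a ∈ entriesLow k w ∧ (a - x) ∈ entriesHigh n k w ∧
    entriesLow k w' = (a - x) ::ₘ (entriesLow k w).erase a ∧
    entriesHigh n k w' = a ::ₘ (entriesHigh n k w).erase (a - x)

/-- Pair of type B4: for some `a > x > 0`, `w'` is obtained from `w` by replacing
the entry `a - x` (at a position `≤ k`) by `a` and the entry `-a` (at a position `> k`)
by `-(a-x)`. -/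
def TypeB4 (n k : ℕ) (w w' : ℤ → ℤ) : Prop :=
  Grassmannian n k w ∧ Grassmannian n k w' ∧
  ∃ a x : ℤ, 0 < x ∧ x < a ∧
    (a - x) ∈ entriesLow k w ∧ (-a) ∈ entriesHigh n k w ∧
    entriesLow k w' = a ::ₘ (entriesLow k w).erase (a - x) ∧
    entriesHigh n k w' = (-(a - x)) ::ₘ (entriesHigh n k w).erase (-a)

/-- The longest element `w₀` of `W_n^{(k)}`: `w₀ i = i` for `1 ≤ i ≤ k` and
`w₀ i = -(n + k + 1 - i)` for `k < i ≤ n` (extended to a signed permutation of `ℤ`). -/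
def w0 (n k : ℕ) : ℤ → ℤ := fun i =>
  if (k : ℤ) < i ∧ i ≤ (n : ℤ) then -((n : ℤ) + (k : ℤ) + 1 - i)
  else if -(n : ℤ) ≤ i ∧ i < -(k : ℤ) then (n : ℤ) + (k : ℤ) + 1 + i
  else i

/-- The simple reflection `s_i`: for `i = 0` the sign change `1 ↔ -1`, and for `i ≥ 1`
the swap `i ↔ i+1`, `-i ↔ -(i+1)`. -/
def simpleRefl (i : ℕ) : ℤ → ℤ :=
  if i = 0 then fun m => if m = 1 then -1 else if m = -1 then 1 else m
  else fun m =>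
    if m = (i : ℤ) then (i : ℤ) + 1 else if m = (i : ℤ) + 1 then (i : ℤ)
    else if m = -(i : ℤ) then -(i : ℤ) - 1 else if m = -(i : ℤ) - 1 then -(i : ℤ) else m

section Helpers

lemma sp_zero {n : ℕ} {w : ℤ → ℤ} (hw : SignedPerm n w) : w 0 = 0 := by
  have := hw.2.1 0
  simp only [neg_zero] at this
  linarith

lemma sp_abs_mem {n : ℕ} {w : ℤ → ℤ} (hw : SignedPerm n w) {j : ℤ}
    (hj : j ∈ Finset.Icc (1:ℤ) (n:ℤ)) : |w j| ∈ Finset.Icc (1:ℤ) (n:ℤ) := by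
  simp only [Finset.mem_Icc] at hj ⊢
  constructor
  · rcases eq_or_ne (w j) 0 with h | h
    · exfalso
      have : j = 0 := hw.1.1 (h.trans (sp_zero hw).symm)
      omega
    · exact Int.one_le_abs h
  · by_contra h
    push_neg at h
    have hfix : w (w j) = w j := hw.2.2 _ h
    have hj2 : w j = j := hw.1.1 hfix
    rw [hj2] at h
    rw [abs_of_pos (by omega : (0:ℤ) < j)] at h
    omega

lemma sp_abs_surj {n : ℕ} {w : ℤ → ℤ} (hw : SignedPerm n w) {m : ℤ}
    (hm : m ∈ Finset.Icc (1:ℤ) (n:ℤ)) :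
    ∃ j ∈ Finset.Icc (1:ℤ) (n:ℤ), |w j| = m := by
  simp only [Finset.mem_Icc] at hm
  obtain ⟨j, hj⟩ := hw.1.2 m
  have hj0 : j ≠ 0 := by
    intro h; rw [h, sp_zero hw] at hj; omega
  have hjle : |j| ≤ (n:ℤ) := by
    by_contra h
    push_neg at h
    have : w j = j := hw.2.2 _ h
    rw [this] at hj
    rw [hj, abs_of_pos (by omega : (0:ℤ) < m)] at h
    omega
  refine ⟨|j|, Finset.mem_Icc.mpr ⟨Int.one_le_abs hj0, hjle⟩, ?_⟩
  rcases lt_or_gt_of_ne hj0 with h | h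
  · rw [abs_of_neg h, hw.2.1 j, hj, abs_neg]
    exact abs_of_pos (by omega)
  · rw [abs_of_pos h, hj]
    exact abs_of_pos (by omega)

lemma sp_abs_inj {n : ℕ} {w : ℤ → ℤ} (hw : SignedPerm n w) {j₁ j₂ : ℤ}
    (h1 : j₁ ∈ Finset.Icc (1:ℤ) (n:ℤ)) (h2 : j₂ ∈ Finset.Icc (1:ℤ) (n:ℤ))
    (h : |w j₁| = |w j₂|) : j₁ = j₂ := by
  simp only [Finset.mem_Icc] at h1 h2
  rcases abs_eq_abs.mp h with h | h
  · exact hw.1.1 h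
  · have : w j₁ = w (-j₂) := by rw [hw.2.1 j₂, h]
    have := hw.1.1 this
    omega

/-- The number of positions in `[1,n]` with `|w j| ≤ u` is `u`, for `0 ≤ u ≤ n`. -/
lemma count_abs {n : ℕ} {w : ℤ → ℤ} (hw : SignedPerm n w) {u : ℤ}
    (hu0 : 0 ≤ u) (hun : u ≤ (n:ℤ)) :
    (((Finset.Icc (1:ℤ) (n:ℤ)).filter (fun j => |w j| ≤ u)).card : ℤ) = u := by
  have hcard : ((Finset.Icc (1:ℤ) (n:ℤ)).filter (fun j => |w j| ≤ u)).card
      = (Finset.Icc (1:ℤ) u).card := by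
    apply Finset.card_bij (fun j _ => |w j|)
    · intro a ha
      simp only [Finset.mem_filter] at ha
      have := sp_abs_mem hw ha.1
      simp only [Finset.mem_Icc] at this ⊢
      exact ⟨this.1, ha.2⟩
    · intro a ha b hb hab
      simp only [Finset.mem_filter] at ha hb
      exact sp_abs_inj hw ha.1 hb.1 hab
    · intro m hm
      simp only [Finset.mem_Icc] at hm
      obtain ⟨j, hj, hjm⟩ := sp_abs_surj hw (Finset.mem_Icc.mpr ⟨hm.1, le_trans hm.2 hun⟩)
      exact ⟨j, by simp only [Finset.mem_filter]; exact ⟨hj, by omega⟩, hjm⟩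
  rw [hcard, Int.card_Icc]
  omega

end Helpers

/-- `ℓ(w) = Σ_{i=1}^{k} α_i + Σ_{i=1}^{r} λ_i`. -/
theorem stmt_1 (n k : ℕ) (hn : 1 ≤ n) (hk : k ≤ n) (w : ℤ → ℤ)
    (hw : Grassmannian n k w) :
    len n w = (∑ i ∈ Finset.Icc (1 : ℤ) (k : ℤ), alphaPart n k w i) +
      ∑ j ∈ (Finset.Icc ((k : ℤ) + 1) (n : ℤ)).filter (fun j => w j < 0), (-(w j)) := by
  obtain ⟨hsp, hpos, hmono1, hmono2⟩ := hw
  have hinj := hsp.1.1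
  set K := Finset.Icc (1:ℤ) (k:ℤ) with hK
  set H := Finset.Icc ((k:ℤ)+1) (n:ℤ) with hH
  -- Step A: negative entries occur only at positions > k
  have hfilter : (Finset.Icc (1:ℤ) (n:ℤ)).filter (fun j => w j < 0)
      = H.filter (fun j => w j < 0) := by
    ext j
    simp only [hH, Finset.mem_filter, Finset.mem_Icc]
    constructor
    · rintro ⟨⟨h1, h2⟩, h3⟩
      refine ⟨⟨?_, h2⟩, h3⟩
      by_contra h
      push_neg at h
      have := hpos j h1 (by omega)
      omega
    · rintro ⟨⟨h1, h2⟩, h3⟩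
      exact ⟨⟨by omega, h2⟩, h3⟩
  -- Step B: the inversion set is K × H with w j < w i
  have hinvK : ((Finset.Icc (1:ℤ) (n:ℤ) ×ˢ Finset.Icc (1:ℤ) (n:ℤ)).filter
      (fun p => p.1 < p.2 ∧ w p.2 < w p.1))
      = (K ×ˢ H).filter (fun p => w p.2 < w p.1) := by
    ext ⟨i, j⟩
    simp only [hK, hH, Finset.mem_filter, Finset.mem_product, Finset.mem_Icc]
    constructor
    · rintro ⟨⟨⟨hi1, hi2⟩, ⟨hj1, hj2⟩⟩, hij, hlt⟩
      have hik : i ≤ (k:ℤ) := by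
        by_contra h; push_neg at h
        exact absurd (hmono2 i j h hij hj2) (by omega)
      have hjk : (k:ℤ) + 1 ≤ j := by
        by_contra h; push_neg at h
        exact absurd (hmono1 i j hi1 hij (by omega)) (by omega)
      exact ⟨⟨⟨hi1, hik⟩, hjk, hj2⟩, hlt⟩
    · rintro ⟨⟨⟨hi1, hi2⟩, hj1, hj2⟩, hlt⟩
      exact ⟨⟨⟨hi1, by omega⟩, by omega, hj2⟩, by omega, hlt⟩
  -- Step C: per-row inversion count
  have hper : ∀ i ∈ K, ((H.filter (fun j => w j < w i)).card : ℤ)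
      = alphaPart n k w i := by
    intro i hi
    simp only [hK, Finset.mem_Icc] at hi
    have hui : 0 < w i := hpos i hi.1 hi.2
    have huin : w i ≤ (n:ℤ) := by
      have := sp_abs_mem hsp (Finset.mem_Icc.mpr ⟨hi.1, by omega⟩)
      simp only [Finset.mem_Icc] at this
      rw [abs_of_pos hui] at this
      exact this.2
    -- split the inversion condition
    have hsplit : H.filter (fun j => w j < w i)
        = H.filter (fun j => |w j| ≤ w i)
          ∪ H.filter (fun j => w j < 0 ∧ w i < -(w j)) := by
      rw [← Finset.filter_or]
      apply Finset.filter_congr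
      intro j hj
      simp only [hH, Finset.mem_Icc] at hj
      have hne : w j ≠ w i := by
        intro h
        have := hinj h
        omega
      rw [abs_le]
      constructor
      · intro h; omega
      · intro h; omega
    have hdisj : Disjoint (H.filter (fun j => |w j| ≤ w i))
        (H.filter (fun j => w j < 0 ∧ w i < -(w j))) := by
      rw [Finset.disjoint_left]
      intro j h1 h2
      simp only [Finset.mem_filter, abs_le] at h1 h2
      omega
    -- count of |w j| ≤ w i over positions ≤ k is i
    have hlowcard : ((K.filter (fun j => |w j| ≤ w i)).card : ℤ) = i := by
      have heq : K.filter (fun j => |w j| ≤ w i) = Finset.Icc (1:ℤ) i := by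
        ext j
        simp only [hK, Finset.mem_filter, Finset.mem_Icc]
        constructor
        · rintro ⟨⟨h1, h2⟩, h3⟩
          refine ⟨h1, ?_⟩
          by_contra h
          push_neg at h
          have hlt := hmono1 i j hi.1 h h2
          have := hpos j h1 h2
          rw [abs_of_pos this] at h3
          omega
        · rintro ⟨h1, h2⟩
          have hjk : j ≤ (k:ℤ) := by omega
          have hpj := hpos j h1 hjk
          refine ⟨⟨h1, hjk⟩, ?_⟩
          rw [abs_of_pos hpj]
          rcases eq_or_lt_of_le h2 with h | h
          · rw [h]
          · exact le_of_lt (hmono1 j i h1 h hi.2)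
      rw [heq, Int.card_Icc]
      omega
    -- splitting [1,n] into [1,k] ∪ [k+1,n]
    have hIcc : Finset.Icc (1:ℤ) (n:ℤ) = K ∪ H := by
      ext j
      simp only [hK, hH, Finset.mem_union, Finset.mem_Icc]
      omega
    have hdisjKH : Disjoint (K.filter (fun j => |w j| ≤ w i))
        (H.filter (fun j => |w j| ≤ w i)) := by
      rw [Finset.disjoint_left]
      intro j h1 h2
      simp only [hK, hH, Finset.mem_filter, Finset.mem_Icc] at h1 h2
      omega
    have habs := count_abs hsp (le_of_lt hui) huin
    rw [hIcc, Finset.filter_union, Finset.card_union_of_disjoint hdisjKH] at habs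
    push_cast at habs
    have hhighcard : ((H.filter (fun j => |w j| ≤ w i)).card : ℤ) = w i - i := by
      omega
    rw [hsplit, Finset.card_union_of_disjoint hdisj]
    push_cast
    rw [hhighcard]
    unfold alphaPart dcount
    push_cast
    ring
  -- Step D: rewrite invCount as a sum
  have hinv : (invCount n w : ℤ) = ∑ i ∈ K, alphaPart n k w i := by
    have h1 : invCount n w = ∑ i ∈ K, (H.filter (fun j => w j < w i)).card := by
      unfold invCount
      rw [hinvK, Finset.card_filter, Finset.sum_product]
      exact Finset.sum_congr rfl (fun i _ => (Finset.card_filter _ _).symm)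
    rw [h1]
    push_cast
    exact Finset.sum_congr rfl hper
  -- assemble
  unfold len
  rw [hfilter, hinv]
  have : ∑ j ∈ H.filter (fun j => w j < 0), w j
      = - ∑ j ∈ H.filter (fun j => w j < 0), (-(w j)) := by
    simp
  rw [this]
  ring
end

section
/- Let w ∈ W_n^{(k)} have −1 as an entry at some position > k. Then the permutation w' obtained from w by replacing the entry −1 by 1 among its entries at positions > k (and reordering increasingly) belongs to W_n^{(k)}, and w covers w'. -/
/-- if `-1` is an entry of `w ∈ W_n^{(k)}` at a position `> k`, then the
permutation `w'` obtained by replacing `-1` by `1` among positions `> k` belongs to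
`W_n^{(k)}` and `w` covers `w'`. -/
theorem stmt_5 (n k : ℕ) (hn : 1 ≤ n) (hk : k ≤ n) (w : ℤ → ℤ)
    (hw : Grassmannian n k w) (h1 : (-1 : ℤ) ∈ entriesHigh n k w) :
    ∃ w' : ℤ → ℤ, Grassmannian n k w' ∧
      entriesLow k w' = entriesLow k w ∧
      entriesHigh n k w' = 1 ::ₘ (entriesHigh n k w).erase (-1) ∧
      Covers n w w' := by
  obtain ⟨⟨hbij, hneg, hfix⟩, hpos, hlow, hhigh⟩ := hw
  rw [entriesHigh, Multiset.mem_map] at h1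
  obtain ⟨p, hps, hwp⟩ := h1
  rw [Finset.mem_val, Finset.mem_Icc] at hps
  have hp1 : (k : ℤ) + 1 ≤ p := hps.1
  have hp2 : p ≤ (n : ℤ) := hps.2
  have hppos : 0 < p := by omega
  have hinj := hbij.injective
  have hw0 : w 0 = 0 := by have h := hneg 0; rw [neg_zero] at h; omega
  have hwmp : w (-p) = 1 := by rw [hneg, hwp]; ring
  have hkey : ∀ m : ℤ, m ≠ p → m ≠ -p → m ≠ 0 → w m ≠ 1 ∧ w m ≠ -1 ∧ w m ≠ 0 := by
    intro m h1 h2 h3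
    refine ⟨fun h => h2 (hinj (h.trans hwmp.symm)),
      fun h => h1 (hinj (h.trans hwp.symm)),
      fun h => h3 (hinj (h.trans hw0.symm))⟩
  set w' : ℤ → ℤ := fun m => if m = p then 1 else if m = -p then -1 else w m with hw'def
  set t : ℤ → ℤ := fun m => if m = p then -p else if m = -p then p else m with htdef
  have hw'p : w' p = 1 := by simp [hw'def]
  have hw'mp : w' (-p) = -1 := by
    simp only [hw'def]
    rw [if_neg (by omega)]
    simp
  have hw'o : ∀ m : ℤ, m ≠ p → m ≠ -p → w' m = w m := by
    intro m h1 h2; simp [hw'def, h1, h2]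
  have htinv : Function.Involutive t := by
    intro m
    simp only [htdef]
    split_ifs <;> omega
  have hwt : w' = w ∘ t := by
    funext m
    simp only [hw'def, htdef, Function.comp]
    split_ifs with h1 h2
    · exact hwmp.symm
    · exact hwp.symm
    · rfl
  have hneg' : ∀ i : ℤ, w' (-i) = -w' i := by
    intro i
    rcases eq_or_ne i p with rfl | h1
    · rw [hw'mp, hw'p]
    rcases eq_or_ne i (-p) with rfl | h2
    · rw [neg_neg, hw'p, hw'mp]; ring
    · rw [hw'o _ h1 h2, hw'o (-i) (by omega) (by omega), hneg]
  have hfix' : ∀ i : ℤ, (n : ℤ) < |i| → w' i = i := by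
    intro i hi
    have habs : i < -(n : ℤ) ∨ (n : ℤ) < i := by
      rcases abs_cases i with ⟨h, _⟩ | ⟨h, _⟩ <;> omega
    rw [hw'o i (by omega) (by omega)]
    exact hfix i hi
  have hbij' : Function.Bijective w' := by
    rw [hwt]; exact hbij.comp htinv.bijective
  have hpos' : ∀ i : ℤ, 1 ≤ i → i ≤ (k : ℤ) → 0 < w' i := by
    intro i hi1 hi2
    rw [hw'o i (by omega) (by omega)]
    exact hpos i hi1 hi2
  have hlow' : ∀ i j : ℤ, 1 ≤ i → i < j → j ≤ (k : ℤ) → w' i < w' j := by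
    intro i j hi hij hj
    rw [hw'o i (by omega) (by omega), hw'o j (by omega) (by omega)]
    exact hlow i j hi hij hj
  have hhigh' : ∀ i j : ℤ, (k : ℤ) < i → i < j → j ≤ (n : ℤ) → w' i < w' j := by
    intro i j hi hij hj
    rcases eq_or_ne i p with heq | h1
    · subst heq
      have hjne : j ≠ i := by omega
      rw [hw'p, hw'o j hjne (by omega)]
      have h2 := hhigh i j hi hij hj
      have h3 := hkey j hjne (by omega) (by omega)
      omega
    rcases eq_or_ne j p with heq | h2
    · subst heq
      rw [hw'p, hw'o i h1 (by omega)]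
      have h3 := hhigh i j hi hij hj
      omega
    · rw [hw'o i h1 (by omega), hw'o j h2 (by omega)]
      exact hhigh i j hi hij hj
  have hloweq : entriesLow k w' = entriesLow k w := by
    unfold entriesLow
    apply Multiset.map_congr rfl
    intro m hm
    rw [Finset.mem_val, Finset.mem_Icc] at hm
    exact hw'o m (by omega) (by omega)
  have hmem : p ∈ (Finset.Icc ((k : ℤ) + 1) (n : ℤ)).val :=
    Finset.mem_val.mpr (Finset.mem_Icc.mpr ⟨hp1, hp2⟩)
  have hcons : (Finset.Icc ((k : ℤ) + 1) (n : ℤ)).val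
      = p ::ₘ (Finset.Icc ((k : ℤ) + 1) (n : ℤ)).val.erase p :=
    (Multiset.cons_erase hmem).symm
  have hrest : ∀ m ∈ (Finset.Icc ((k : ℤ) + 1) (n : ℤ)).val.erase p, w' m = w m := by
    intro m hm
    have hnd := (Finset.Icc ((k : ℤ) + 1) (n : ℤ)).nodup
    obtain ⟨hmp, hms⟩ := (Multiset.Nodup.mem_erase_iff hnd).mp hm
    rw [Finset.mem_val, Finset.mem_Icc] at hms
    exact hw'o m hmp (by omega)
  have hhigheq : entriesHigh n k w' = 1 ::ₘ (entriesHigh n k w).erase (-1) := by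
    unfold entriesHigh
    rw [hcons, Multiset.map_cons, Multiset.map_cons, hw'p, hwp,
      Multiset.erase_cons_head, Multiset.map_congr rfl hrest]
  have hinvEq : invCount n w' = invCount n w := by
    unfold invCount
    apply congrArg
    apply Finset.filter_congr
    intro x hx
    rw [Finset.mem_product, Finset.mem_Icc, Finset.mem_Icc] at hx
    obtain ⟨⟨ha1, ha2⟩, hb1, hb2⟩ := hx
    rcases eq_or_ne x.1 p with h1 | h1
    · rcases eq_or_ne x.2 p with h2 | h2
      · constructor <;> intro h <;> exact absurd h.1 (by omega)
      · rw [h1, hw'p, hwp, hw'o x.2 h2 (by omega)]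
        have h3 := hkey x.2 h2 (by omega) (by omega)
        constructor <;> intro h <;> exact ⟨h.1, by omega⟩
    rcases eq_or_ne x.2 p with h2 | h2
    · rw [h2, hw'p, hwp, hw'o x.1 h1 (by omega)]
      have h3 := hkey x.1 h1 (by omega) (by omega)
      constructor <;> intro h <;> exact ⟨h.1, by omega⟩
    · rw [hw'o x.1 h1 (by omega), hw'o x.2 h2 (by omega)]
  have hpnot : p ∉ (Finset.Icc (1 : ℤ) (n : ℤ)).filter (fun j => w' j < 0) := by
    intro h
    rw [Finset.mem_filter] at h
    omega
  have hfilter : (Finset.Icc (1 : ℤ) (n : ℤ)).filter (fun j => w j < 0)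
      = insert p ((Finset.Icc (1 : ℤ) (n : ℤ)).filter (fun j => w' j < 0)) := by
    ext j
    rw [Finset.mem_insert, Finset.mem_filter, Finset.mem_filter, Finset.mem_Icc]
    rcases eq_or_ne j p with rfl | hj
    · rw [hwp]
      constructor
      · intro _; exact Or.inl rfl
      · intro _; exact ⟨⟨by omega, hp2⟩, by omega⟩
    · constructor
      · rintro ⟨⟨hj1, hj2⟩, hwj⟩
        exact Or.inr ⟨⟨hj1, hj2⟩, by rwa [hw'o j hj (by omega)]⟩
      · rintro (h | ⟨⟨hj1, hj2⟩, hwj⟩)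
        · exact absurd h hj
        · exact ⟨⟨hj1, hj2⟩, by rwa [hw'o j hj (by omega)] at hwj⟩
  have hsum : ∑ j ∈ (Finset.Icc (1 : ℤ) (n : ℤ)).filter (fun j => w j < 0), w j
      = -1 + ∑ j ∈ (Finset.Icc (1 : ℤ) (n : ℤ)).filter (fun j => w' j < 0), w' j := by
    rw [hfilter, Finset.sum_insert hpnot, hwp]
    congr 1
    apply Finset.sum_congr rfl
    intro j hj
    rw [Finset.mem_filter, Finset.mem_Icc] at hj
    have hjp : j ≠ p := fun h => hpnot (by rw [Finset.mem_filter, Finset.mem_Icc]; exact h ▸ hj)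
    exact (hw'o j hjp (by omega)).symm
  have hlen : len n w = len n w' + 1 := by
    unfold len
    rw [hinvEq, hsum]
    ring
  exact ⟨w', ⟨⟨hbij', hneg', hfix'⟩, hpos', hlow', hhigh'⟩, hloweq, hhigheq,
    t, Or.inr ⟨p, by omega, hp2, htdef⟩, hwt, hlen⟩
end

section
/- Let w ∈ W_n^{(k)} and let a > 1 be an integer such that both −a and a−1 are entries of w at positions > k. Then the permutation w' obtained from w by replacing the entries −a and a−1 by −(a−1) and a respectively among positions > k (and reordering increasingly) belongs to W_n^{(k)}, and w covers w'. -/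
/-- if `-a` and `a-1` (with `a > 1`) are entries of `w ∈ W_n^{(k)}` at
positions `> k`, then the permutation `w'` obtained by replacing them by `-(a-1)` and
`a` belongs to `W_n^{(k)}` and `w` covers `w'`. -/
theorem stmt_6 (n k : ℕ) (hn : 1 ≤ n) (hk : k ≤ n) (w : ℤ → ℤ)
    (hw : Grassmannian n k w) (a : ℤ) (ha : 1 < a)
    (hna : (-a) ∈ entriesHigh n k w) (ha1 : (a - 1) ∈ entriesHigh n k w) :
    ∃ w' : ℤ → ℤ, Grassmannian n k w' ∧
      entriesLow k w' = entriesLow k w ∧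
      entriesHigh n k w' =
        a ::ₘ (-(a - 1)) ::ₘ (((entriesHigh n k w).erase (-a)).erase (a - 1)) ∧
      Covers n w w' := by
  obtain ⟨⟨hbij, hodd, hfix⟩, hpos, hlowinc, hhighinc⟩ := hw
  have winj := hbij.injective
  simp only [entriesHigh, Multiset.mem_map, Finset.mem_val, Finset.mem_Icc] at hna ha1
  obtain ⟨p, ⟨hp1, hp2⟩, hwp⟩ := hna
  obtain ⟨q, ⟨hq1, hq2⟩, hwq⟩ := ha1
  -- basic facts
  have hpq : p < q := by
    rcases lt_trichotomy p q with h | h | h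
    · exact h
    · exfalso; rw [h, hwq] at hwp; omega
    · have := hhighinc q p (by omega) h hp2; omega
  have hnoA : ∀ m : ℤ, 1 ≤ m → w m ≠ a := by
    intro m hm heq
    have : w (-p) = a := by rw [hodd, hwp]; ring
    have := winj (heq.trans this.symm); omega
  have hnoA1 : ∀ m : ℤ, 1 ≤ m → w m ≠ -(a - 1) := by
    intro m hm heq
    have : w (-q) = -(a - 1) := by rw [hodd, hwq]
    have := winj (heq.trans this.symm); omega
  -- the reflection
  set t : ℤ → ℤ := fun m => if m = p then -q else if m = -q then p
      else if m = -p then -(-q) else if m = -(-q) then -p else m with ht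
  have htval : ∀ m : ℤ, t m = if m = p then -q else if m = -q then p
      else if m = -p then q else if m = q then -p else m := by
    intro m; simp only [ht]; omega
  have htinv : ∀ m : ℤ, t (t m) = m := by
    intro m; simp only [ht]; omega
  have htodd : ∀ m : ℤ, t (-m) = -(t m) := by
    intro m; simp only [ht]; omega
  have htbij : Function.Bijective t := Function.Involutive.bijective htinv
  have hw'p : (w ∘ t) p = -(a - 1) := by
    have : t p = -q := by rw [htval]; omega
    simp only [Function.comp, this, hodd, hwq]
  have hw'q : (w ∘ t) q = a := by
    have : t q = -p := by rw [htval]; omega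
    simp only [Function.comp, this, hodd, hwp]; ring
  have hw'eq : ∀ m : ℤ, 1 ≤ m → m ≠ p → m ≠ q → (w ∘ t) m = w m := by
    intro m hm hmp hmq
    have : t m = m := by rw [htval]; omega
    simp only [Function.comp, this]
  -- order facts around p and q
  have habove_p : ∀ m : ℤ, p < m → m ≤ (n : ℤ) → m ≠ q → -(a - 1) < w m := by
    intro m h1 h2 h3
    have := hhighinc p m (by omega) h1 h2
    have := hnoA1 m (by omega); omega
  have habove_q : ∀ m : ℤ, q < m → m ≤ (n : ℤ) → a < w m := by
    intro m h1 h2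
    have := hhighinc q m (by omega) h1 h2
    have := hnoA m (by omega); omega
  have hbelow_p : ∀ m : ℤ, (k : ℤ) < m → m < p → w m < -a := by
    intro m h1 h2; have := hhighinc m p h1 h2 hp2; omega
  have hbelow_q : ∀ m : ℤ, (k : ℤ) < m → m < q → m ≠ p → w m < a - 1 := by
    intro m h1 h2 h3; have := hhighinc m q h1 h2 hq2; omega
  -- Grassmannian for w'
  have hgrass : Grassmannian n k (w ∘ t) := by
    refine ⟨⟨hbij.comp htbij, ?_, ?_⟩, ?_, ?_, ?_⟩
    · intro i; simp only [Function.comp, htodd, hodd]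
    · intro i hi
      have h1 : t i = i := by rw [htval]; rcases abs_cases i with ⟨h, _⟩ | ⟨h, _⟩ <;> omega
      simp only [Function.comp, h1]; exact hfix i hi
    · intro i h1 h2
      rw [hw'eq i h1 (by omega) (by omega)]; exact hpos i h1 h2
    · intro i j h1 h2 h3
      rw [hw'eq i h1 (by omega) (by omega), hw'eq j (by omega) (by omega) (by omega)]
      exact hlowinc i j h1 h2 h3
    · intro i j h1 h2 h3
      by_cases hip : i = p
      · subst hip; rw [hw'p]
        by_cases hjq : j = q
        · subst hjq; rw [hw'q]; omega
        · rw [hw'eq j (by omega) (by omega) hjq]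
          exact habove_p j h2 h3 hjq
      · by_cases hiq : i = q
        · subst hiq; rw [hw'q]
          rw [hw'eq j (by omega) (by omega) (by omega)]
          exact habove_q j h2 h3
        · rw [hw'eq i (by omega) hip hiq]
          by_cases hjp : j = p
          · subst hjp; rw [hw'p]
            have := hbelow_p i h1 h2; omega
          · by_cases hjq : j = q
            · subst hjq; rw [hw'q]
              have := hbelow_q i h1 h2 hip; omega
            · rw [hw'eq j (by omega) hjp hjq]
              exact hhighinc i j h1 h2 h3
  -- entriesLow equality
  have hlow : entriesLow k (w ∘ t) = entriesLow k w := by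
    apply Multiset.map_congr rfl
    intro m hm
    simp only [Finset.mem_val, Finset.mem_Icc] at hm
    exact hw'eq m hm.1 (by omega) (by omega)
  -- entriesHigh equality
  have hhigh : entriesHigh n k (w ∘ t) =
      a ::ₘ (-(a - 1)) ::ₘ (((entriesHigh n k w).erase (-a)).erase (a - 1)) := by
    set S : Multiset ℤ := (Finset.Icc ((k : ℤ) + 1) (n : ℤ)).val with hSdef
    have hSnd : S.Nodup := (Finset.Icc ((k : ℤ) + 1) (n : ℤ)).nodup
    have hpS : p ∈ S := by simp [hSdef, Finset.mem_Icc]; omega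
    have hqS : q ∈ S.erase p :=
      (Multiset.mem_erase_of_ne (by omega)).2 (by simp [hSdef, Finset.mem_Icc]; omega)
    have hS : S = p ::ₘ q ::ₘ (S.erase p).erase q := by
      rw [Multiset.cons_erase hqS, Multiset.cons_erase hpS]
    have hmem : ∀ m ∈ (S.erase p).erase q, (k : ℤ) + 1 ≤ m ∧ m ≠ p ∧ m ≠ q := by
      intro m hm
      have h1 := (Multiset.Nodup.mem_erase_iff (Multiset.Nodup.erase p hSnd)).1 hm
      have h2 := (Multiset.Nodup.mem_erase_iff hSnd).1 h1.2
      have h3 : m ∈ S := h2.2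
      simp only [hSdef, Finset.mem_val, Finset.mem_Icc] at h3
      exact ⟨h3.1, h2.1, h1.1⟩
    have hM : Multiset.map (w ∘ t) ((S.erase p).erase q) =
        Multiset.map w ((S.erase p).erase q) := by
      apply Multiset.map_congr rfl
      intro m hm
      obtain ⟨h1, h2, h3⟩ := hmem m hm
      exact hw'eq m (by omega) h2 h3
    show Multiset.map (w ∘ t) S = _
    have hw0 : entriesHigh n k w = Multiset.map w S := rfl
    rw [hw0, hS]
    simp only [Multiset.map_cons, hw'p, hw'q, hwp, hwq, hM]
    rw [Multiset.erase_cons_head]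
    rw [Multiset.erase_cons_head]
    exact Multiset.cons_swap _ _ _
  -- length
  have key : ∀ i j : ℤ, 1 ≤ i → j ≤ (n : ℤ) → i < j →
      ((w ∘ t) j < (w ∘ t) i ↔ w j < w i) := by
    intro i j hi1 hj2 hlt
    by_cases hip : i = p
    · rw [hip, hw'p, hwp]
      by_cases hjq : j = q
      · rw [hjq, hw'q, hwq]; omega
      · rw [hw'eq j (by omega) (by omega) hjq]
        have h1 := habove_p j (by omega) hj2 hjq
        have h2 := hhighinc p j (by omega) (by omega) hj2
        omega
    · by_cases hiq : i = q
      · rw [hiq, hw'q, hwq]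
        rw [hw'eq j (by omega) (by omega) (by omega)]
        have := habove_q j (by omega) hj2
        omega
      · rw [hw'eq i hi1 hip hiq]
        by_cases hjp : j = p
        · rw [hjp, hw'p, hwp]
          by_cases hik : i ≤ (k : ℤ)
          · have := hpos i hi1 hik; omega
          · have := hbelow_p i (by omega) (by omega); omega
        · by_cases hjq : j = q
          · rw [hjq, hw'q, hwq]
            have hia := hnoA i hi1
            omega
          · rw [hw'eq j (by omega) hjp hjq]
  have hinv : invCount n (w ∘ t) = invCount n w := by
    unfold invCount
    congr 1
    apply Finset.filter_congr
    rintro ⟨i, j⟩ hij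
    simp only [Finset.mem_product, Finset.mem_Icc] at hij
    obtain ⟨⟨hi1, hi2⟩, hj1, hj2⟩ := hij
    simp only
    constructor
    · rintro ⟨hlt, hv⟩; exact ⟨hlt, (key i j hi1 hj2 hlt).1 hv⟩
    · rintro ⟨hlt, hv⟩; exact ⟨hlt, (key i j hi1 hj2 hlt).2 hv⟩
  have hsum : ∑ j ∈ (Finset.Icc (1 : ℤ) (n : ℤ)).filter (fun j => (w ∘ t) j < 0), (w ∘ t) j =
      (∑ j ∈ (Finset.Icc (1 : ℤ) (n : ℤ)).filter (fun j => w j < 0), w j) + 1 := by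
    have hFeq : (Finset.Icc (1 : ℤ) (n : ℤ)).filter (fun j => (w ∘ t) j < 0) =
        (Finset.Icc (1 : ℤ) (n : ℤ)).filter (fun j => w j < 0) := by
      apply Finset.filter_congr
      intro j hj
      simp only [Finset.mem_Icc] at hj
      by_cases hjp : j = p
      · subst hjp; rw [hw'p, hwp]; omega
      · by_cases hjq : j = q
        · subst hjq; rw [hw'q, hwq]; omega
        · rw [hw'eq j hj.1 hjp hjq]
    rw [hFeq]
    have hpF : p ∈ (Finset.Icc (1 : ℤ) (n : ℤ)).filter (fun j => w j < 0) := by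
      simp only [Finset.mem_filter, Finset.mem_Icc, hwp]; omega
    have : ∀ j ∈ (Finset.Icc (1 : ℤ) (n : ℤ)).filter (fun j => w j < 0),
        (w ∘ t) j = w j + (if j = p then 1 else 0) := by
      intro j hj
      simp only [Finset.mem_filter, Finset.mem_Icc] at hj
      by_cases hjp : j = p
      · subst hjp; rw [hw'p, hwp, if_pos rfl]; ring
      · by_cases hjq : j = q
        · exfalso; rw [hjq, hwq] at hj; omega
        · rw [hw'eq j hj.1.1 hjp hjq]; simp [hjp]
    rw [Finset.sum_congr rfl this, Finset.sum_add_distrib, Finset.sum_ite_eq', if_pos hpF]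
  have hlen : len n w = len n (w ∘ t) + 1 := by
    unfold len
    rw [hinv, hsum]; ring
  refine ⟨w ∘ t, hgrass, hlow, hhigh, t, Or.inl ⟨p, -q, by omega, ?_, ?_, ht⟩, rfl, hlen⟩
  · rw [abs_neg, abs_of_pos (by omega : (0:ℤ) < q)]; omega
  · rw [abs_neg, abs_of_pos (by omega : (0:ℤ) < q)]; omega
end

section
/- Let w ∈ W_n^{(k)}, let a > b > 0 be integers such that a is an entry of w at a position ≤ k, b is an entry of w at a position > k, and every integer c with b < c < a satisfies that −c is an entry of w at a position > k (i.e., all intermediate values belong to the λ's). Then the permutation w' obtained from w by exchanging a and b (b among positions ≤ k, a among positions > k, each group reordered increasingly) belongs to W_n^{(k)}, and w covers w'. -/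
set_option maxHeartbeats 2000000 in
/-- if `a` is an entry of `w` at a position `≤ k`, `b` is an entry at a
position `> k`, `a > b > 0`, and every `c` with `b < c < a` satisfies that `-c` is an
entry of `w` at a position `> k`, then the permutation `w'` obtained by exchanging
`a` and `b` belongs to `W_n^{(k)}` and `w` covers `w'`. -/
theorem stmt_7 (n k : ℕ) (hn : 1 ≤ n) (hk : k ≤ n) (w : ℤ → ℤ)
    (hw : Grassmannian n k w) (a b : ℤ) (hb : 0 < b) (hba : b < a)
    (ha : a ∈ entriesLow k w) (hbv : b ∈ entriesHigh n k w)
    (hmid : ∀ c : ℤ, b < c → c < a → (-c) ∈ entriesHigh n k w) :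
    ∃ w' : ℤ → ℤ, Grassmannian n k w' ∧
      entriesLow k w' = b ::ₘ (entriesLow k w).erase a ∧
      entriesHigh n k w' = a ::ₘ (entriesHigh n k w).erase b ∧
      Covers n w w' := by
  obtain ⟨⟨hbij, hneg, hfix⟩, hpos, hlo, hhi⟩ := hw
  have hinj := hbij.injective
  have hkn : (k : ℤ) ≤ (n : ℤ) := by exact_mod_cast hk
  obtain ⟨p, hpmem, hpa⟩ := Multiset.mem_map.mp ha
  obtain ⟨q, hqmem, hqb⟩ := Multiset.mem_map.mp hbv
  rw [Finset.mem_val, Finset.mem_Icc] at hpmem hqmem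
  obtain ⟨hp1, hpk⟩ := hpmem
  obtain ⟨hq1, hqn⟩ := hqmem
  have hpq : p < q := by omega
  have hqpos : (1 : ℤ) ≤ q := by omega
  -- key lemma: values strictly between b and a (inclusive, except at p,q) don't occur
  have L1 : ∀ m : ℤ, 1 ≤ m → m ≤ (n : ℤ) → m ≠ p → m ≠ q → w m < b ∨ a < w m := by
    intro m h1 h2 hmp hmq
    by_contra h
    push_neg at h
    have h3 : w m ≠ b := fun he => hmq (hinj (he.trans hqb.symm))
    have h4 : w m ≠ a := fun he => hmp (hinj (he.trans hpa.symm))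
    have h5 : b < w m := lt_of_le_of_ne h.1 (Ne.symm h3)
    have h6 : w m < a := lt_of_le_of_ne h.2 h4
    obtain ⟨j, hjmem, hj⟩ := Multiset.mem_map.mp (hmid (w m) h5 h6)
    rw [Finset.mem_val, Finset.mem_Icc] at hjmem
    have hwj : w (-j) = w m := by rw [hneg, hj]; ring
    have hmj : -j = m := hinj hwj
    omega
  obtain ⟨t, ht_def⟩ : ∃ t : ℤ → ℤ, t = (fun m => if m = p then q else if m = q then p
      else if m = -p then -q else if m = -q then -p else m) := ⟨_, rfl⟩
  obtain ⟨w', hw'def⟩ : ∃ w' : ℤ → ℤ, w' = w ∘ t := ⟨_, rfl⟩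
  have hw'app : ∀ m, w' m = w (t m) := fun m => by rw [hw'def]; rfl
  have htp : t p = q := by simp only [ht_def]; split_ifs <;> omega
  have htq : t q = p := by simp only [ht_def]; split_ifs <;> omega
  have htother : ∀ m, m ≠ p → m ≠ q → m ≠ -p → m ≠ -q → t m = m := by
    intro m h1 h2 h3 h4; simp only [ht_def]; split_ifs <;> omega
  have hw'p : w' p = b := by rw [hw'app, htp, hqb]
  have hw'q : w' q = a := by rw [hw'app, htq, hpa]
  have hw'other : ∀ m, m ≠ p → m ≠ q → m ≠ -p → m ≠ -q → w' m = w m := by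
    intro m h1 h2 h3 h4; rw [hw'app, htother m h1 h2 h3 h4]
  have hw'pos : ∀ m : ℤ, 1 ≤ m → m ≠ p → m ≠ q → w' m = w m := by
    intro m h1 h2 h3; exact hw'other m h2 h3 (by omega) (by omega)
  have htt : ∀ m, t (t m) = m := by
    intro m; simp only [ht_def]; split_ifs <;> omega
  have htbij : Function.Bijective t := Function.Involutive.bijective htt
  -- SignedPerm w'
  have hbij' : Function.Bijective w' := by rw [hw'def]; exact hbij.comp htbij
  have hneg' : ∀ i : ℤ, w' (-i) = -w' i := by
    intro i
    have h1 : t (-i) = -(t i) := by simp only [ht_def]; split_ifs <;> omega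
    rw [hw'app, hw'app, h1, hneg]
  have hfix' : ∀ i : ℤ, (n : ℤ) < |i| → w' i = i := by
    intro i hi
    have h1 : (n : ℤ) < i ∨ i < -(n : ℤ) := by rcases abs_cases i with ⟨h, _⟩ | ⟨h, _⟩ <;> omega
    have h2 : t i = i := by simp only [ht_def]; split_ifs <;> omega
    rw [hw'app, h2]; exact hfix i hi
  -- Grassmannian w'
  have hG2 : ∀ i : ℤ, 1 ≤ i → i ≤ (k : ℤ) → 0 < w' i := by
    intro i h1 h2
    by_cases hip : i = p
    · rw [hip, hw'p]; exact hb
    · have hiq : i ≠ q := by omega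
      rw [hw'pos i h1 hip hiq]; exact hpos i h1 h2
  have hG3 : ∀ i j : ℤ, 1 ≤ i → i < j → j ≤ (k : ℤ) → w' i < w' j := by
    intro i j h1 hij hjk
    by_cases hip : i = p
    · subst hip
      have hjp : j ≠ i := by omega
      have hjq : j ≠ q := by omega
      rw [hw'p, hw'pos j (by omega) hjp hjq]
      have := hlo i j h1 hij hjk
      omega
    · by_cases hjp : j = p
      · subst hjp
        have hiq : i ≠ q := by omega
        rw [hw'p, hw'pos i h1 hip hiq]
        have h2 : w i < a := by have := hlo i j h1 hij hpk; omega
        rcases L1 i h1 (by omega) hip hiq with h | h <;> omega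
      · have hiq : i ≠ q := by omega
        have hjq : j ≠ q := by omega
        rw [hw'pos i h1 hip hiq, hw'pos j (by omega) hjp hjq]
        exact hlo i j h1 hij hjk
  have hG4 : ∀ i j : ℤ, (k : ℤ) < i → i < j → j ≤ (n : ℤ) → w' i < w' j := by
    intro i j hki hij hjn
    have hip : i ≠ p := by omega
    have hjp : j ≠ p := by omega
    by_cases hiq : i = q
    · subst hiq
      have hjq : j ≠ i := by omega
      rw [hw'q, hw'pos j (by omega) hjp hjq]
      have h2 : b < w j := by have := hhi i j hki hij hjn; omega
      rcases L1 j (by omega) hjn hjp hjq with h | h <;> omega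
    · by_cases hjq : j = q
      · subst hjq
        rw [hw'q, hw'pos i (by omega) hip hiq]
        have := hhi i j hki hij hqn
        omega
      · rw [hw'pos i (by omega) hip hiq, hw'pos j (by omega) hjp hjq]
        exact hhi i j hki hij hjn
  -- entries multisets
  have hlow : entriesLow k w' = b ::ₘ (entriesLow k w).erase a := by
    have hps : p ∈ (Finset.Icc (1 : ℤ) (k : ℤ)).val := by
      rw [Finset.mem_val, Finset.mem_Icc]; exact ⟨hp1, hpk⟩
    have hcons : (Finset.Icc (1 : ℤ) (k : ℤ)).val = p ::ₘ (Finset.Icc (1 : ℤ) (k : ℤ)).val.erase p :=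
      (Multiset.cons_erase hps).symm
    unfold entriesLow
    rw [hcons, Multiset.map_cons, Multiset.map_cons, hw'p, hpa, Multiset.erase_cons_head]
    congr 1
    apply Multiset.map_congr rfl
    intro m hm
    have hmp : m ≠ p := (Multiset.Nodup.mem_erase_iff (Finset.Icc (1 : ℤ) (k : ℤ)).nodup).mp hm |>.1
    have hms : m ∈ (Finset.Icc (1 : ℤ) (k : ℤ)).val := Multiset.mem_of_mem_erase hm
    rw [Finset.mem_val, Finset.mem_Icc] at hms
    exact hw'pos m hms.1 hmp (by omega)
  have hhigh : entriesHigh n k w' = a ::ₘ (entriesHigh n k w).erase b := by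
    have hqs : q ∈ (Finset.Icc ((k : ℤ) + 1) (n : ℤ)).val := by
      rw [Finset.mem_val, Finset.mem_Icc]; omega
    have hcons : (Finset.Icc ((k : ℤ) + 1) (n : ℤ)).val =
        q ::ₘ (Finset.Icc ((k : ℤ) + 1) (n : ℤ)).val.erase q := (Multiset.cons_erase hqs).symm
    unfold entriesHigh
    rw [hcons, Multiset.map_cons, Multiset.map_cons, hw'q, hqb, Multiset.erase_cons_head]
    congr 1
    apply Multiset.map_congr rfl
    intro m hm
    have hmq : m ≠ q :=
      (Multiset.Nodup.mem_erase_iff (Finset.Icc ((k : ℤ) + 1) (n : ℤ)).nodup).mp hm |>.1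
    have hms : m ∈ (Finset.Icc ((k : ℤ) + 1) (n : ℤ)).val := Multiset.mem_of_mem_erase hm
    rw [Finset.mem_val, Finset.mem_Icc] at hms
    exact hw'pos m (by omega) (by omega) hmq
  -- length computation
  have hiff : ∀ i j : ℤ, 1 ≤ i → i ≤ (n : ℤ) → 1 ≤ j → j ≤ (n : ℤ) → i < j →
      ¬(i = p ∧ j = q) → (w j < w i ↔ w' j < w' i) := by
    intro i j hi1 hin hj1 hjn hij hne
    by_cases hip : i = p
    · subst hip
      have hjq : j ≠ q := fun h => hne ⟨rfl, h⟩
      have hjp : j ≠ i := by omega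
      rw [hw'p, hw'pos j hj1 hjp hjq, hpa]
      rcases L1 j hj1 hjn hjp hjq with h | h <;> omega
    · by_cases hiq : i = q
      · subst hiq
        have hjq : j ≠ i := by omega
        have hjp : j ≠ p := by omega
        rw [hw'q, hw'pos j hj1 hjp hjq, hqb]
        rcases L1 j hj1 hjn hjp hjq with h | h <;> omega
      · by_cases hjp : j = p
        · subst hjp
          rw [hw'p, hpa, hw'pos i hi1 hip hiq]
          rcases L1 i hi1 hin hip hiq with h | h <;> omega
        · by_cases hjq : j = q
          · subst hjq
            rw [hw'q, hqb, hw'pos i hi1 hip hiq]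
            rcases L1 i hi1 hin hip hiq with h | h <;> omega
          · rw [hw'pos i hi1 hip hiq, hw'pos j hj1 hjp hjq]
  have hnotmem : ((p, q) : ℤ × ℤ) ∉
      ((Finset.Icc (1 : ℤ) (n : ℤ)) ×ˢ (Finset.Icc (1 : ℤ) (n : ℤ))).filter
        (fun x => x.1 < x.2 ∧ w' x.2 < w' x.1) := by
    simp only [Finset.mem_filter, Finset.mem_product, Finset.mem_Icc, not_and]
    intro _ _
    rw [hw'p, hw'q]
    omega
  have hkey : ((Finset.Icc (1 : ℤ) (n : ℤ)) ×ˢ (Finset.Icc (1 : ℤ) (n : ℤ))).filter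
        (fun x => x.1 < x.2 ∧ w x.2 < w x.1) =
      insert (p, q) (((Finset.Icc (1 : ℤ) (n : ℤ)) ×ˢ (Finset.Icc (1 : ℤ) (n : ℤ))).filter
        (fun x => x.1 < x.2 ∧ w' x.2 < w' x.1)) := by
    ext x
    simp only [Finset.mem_insert, Finset.mem_filter, Finset.mem_product, Finset.mem_Icc,
      Prod.ext_iff]
    constructor
    · rintro ⟨⟨⟨h1, h2⟩, h3, h4⟩, h5, h6⟩
      by_cases hx : x.1 = p ∧ x.2 = q
      · exact Or.inl hx
      · exact Or.inr ⟨⟨⟨h1, h2⟩, h3, h4⟩, h5, (hiff x.1 x.2 h1 h2 h3 h4 h5 hx).mp h6⟩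
    · rintro (⟨hx1, hx2⟩ | ⟨⟨⟨h1, h2⟩, h3, h4⟩, h5, h6⟩)
      · rw [hx1, hx2]
        refine ⟨⟨⟨hp1, by omega⟩, hqpos, hqn⟩, hpq, ?_⟩
        rw [hpa, hqb]; omega
      · by_cases hx : x.1 = p ∧ x.2 = q
        · refine ⟨⟨⟨h1, h2⟩, h3, h4⟩, h5, ?_⟩
          rw [hx.1, hx.2, hpa, hqb]; omega
        · exact ⟨⟨⟨h1, h2⟩, h3, h4⟩, h5, (hiff x.1 x.2 h1 h2 h3 h4 h5 hx).mpr h6⟩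
  have hinv : invCount n w = invCount n w' + 1 := by
    unfold invCount
    rw [hkey, Finset.card_insert_of_notMem hnotmem]
  have hfilter_eq : (Finset.Icc (1 : ℤ) (n : ℤ)).filter (fun j => w' j < 0) =
      (Finset.Icc (1 : ℤ) (n : ℤ)).filter (fun j => w j < 0) := by
    apply Finset.filter_congr
    intro j hj
    rw [Finset.mem_Icc] at hj
    by_cases hjp : j = p
    · subst hjp; rw [hw'p, hpa]; omega
    · by_cases hjq : j = q
      · subst hjq; rw [hw'q, hqb]; omega
      · rw [hw'pos j hj.1 hjp hjq]
  have hsum : ∑ j ∈ (Finset.Icc (1 : ℤ) (n : ℤ)).filter (fun j => w' j < 0), w' j =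
      ∑ j ∈ (Finset.Icc (1 : ℤ) (n : ℤ)).filter (fun j => w j < 0), w j := by
    rw [hfilter_eq]
    apply Finset.sum_congr rfl
    intro j hj
    rw [Finset.mem_filter, Finset.mem_Icc] at hj
    have hjp : j ≠ p := by intro h; rw [h, hpa] at hj; omega
    have hjq : j ≠ q := by intro h; rw [h, hqb] at hj; omega
    exact hw'pos j hj.1.1 hjp hjq
  have hlen : len n w = len n w' + 1 := by
    unfold len
    rw [hinv, hsum]
    push_cast
    ring
  have habs : |q| = q := abs_of_pos (by omega)
  refine ⟨w', ⟨⟨hbij', hneg', hfix'⟩, hG2, hG3, hG4⟩, hlow, hhigh,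
    t, Or.inl ⟨p, q, hp1, by rw [habs]; exact hpq, by rw [habs]; exact hqn, ht_def⟩, hw'def, hlen⟩
end

section
/- Let w ∈ W_n^{(k)}, let a > b > 0 be integers such that b is an entry of w at a position ≤ k, −a is an entry of w at a position > k, and every integer c with b < c < a is a positive entry of w at a position > k (i.e., all intermediate values belong to the v's). Then the permutation w' obtained from w by replacing b with a among positions ≤ k and −a with −b among positions > k (each group reordered increasingly) belongs to W_n^{(k)}, and w covers w'. -/
section Stmt8Aux

private def rt (p q : ℤ) : ℤ → ℤ := fun m =>
  if m = p then -q else if m = -q then p else if m = -p then q else if m = q then -p else m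

private lemma rt_invol (p q : ℤ) (hp : 0 < p) (hpq : p < q) (m : ℤ) :
    rt p q (rt p q m) = m := by
  simp only [rt]; split_ifs <;> omega

private lemma rt_odd (p q : ℤ) (hp : 0 < p) (hpq : p < q) (m : ℤ) :
    rt p q (-m) = -rt p q m := by
  simp only [rt]; split_ifs <;> omega

private lemma rt_fix (p q m : ℤ) (h1 : m ≠ p) (h2 : m ≠ -q) (h3 : m ≠ -p) (h4 : m ≠ q) :
    rt p q m = m := by
  simp only [rt, if_neg h1, if_neg h2, if_neg h3, if_neg h4]

private lemma rt_p (p q : ℤ) : rt p q p = -q := by simp [rt]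

private lemma rt_q (p q : ℤ) (hp : 0 < p) (hpq : p < q) : rt p q q = -p := by
  simp only [rt]; split_ifs <;> omega

private lemma rt_is_refl (n : ℕ) (p q : ℤ) (hp : 1 ≤ p) (hpq : p < q) (hq : q ≤ (n:ℤ)) :
    IsReflection n (rt p q) := by
  left
  refine ⟨p, -q, hp, ?_, ?_, ?_⟩
  · rw [abs_neg, abs_of_pos (by omega)]; exact hpq
  · rw [abs_neg, abs_of_pos (by omega)]; exact hq
  · funext m; simp only [rt, neg_neg]

private lemma map_update_multiset (s : Multiset ℤ) (hnd : s.Nodup) (u v : ℤ → ℤ) (p : ℤ)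
    (hp : p ∈ s) (heq : ∀ x ∈ s, x ≠ p → v x = u x) :
    s.map v = v p ::ₘ (s.map u).erase (u p) := by
  have h1 : s.map u = u p ::ₘ (s.erase p).map u := by
    conv_lhs => rw [← Multiset.cons_erase hp]
    rw [Multiset.map_cons]
  have h2 : s.map v = v p ::ₘ (s.erase p).map v := by
    conv_lhs => rw [← Multiset.cons_erase hp]
    rw [Multiset.map_cons]
  rw [h1, Multiset.erase_cons_head, h2]
  congr 1
  refine Multiset.map_congr rfl (fun x hx => ?_)
  exact heq x (Multiset.mem_of_mem_erase hx) ((hnd.mem_erase_iff).mp hx).1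

end Stmt8Aux

/-- if `b` is an entry of `w` at a position `≤ k`, `-a` is an entry at a
position `> k`, `a > b > 0`, and every `c` with `b < c < a` is a positive entry of `w`
at a position `> k`, then the permutation `w'` obtained by replacing `b` with `a`
among positions `≤ k` and `-a` with `-b` among positions `> k` belongs to `W_n^{(k)}`
and `w` covers `w'`. -/
theorem stmt_8 (n k : ℕ) (hn : 1 ≤ n) (hk : k ≤ n) (w : ℤ → ℤ)
    (hw : Grassmannian n k w) (a b : ℤ) (hb : 0 < b) (hba : b < a)
    (hbu : b ∈ entriesLow k w) (hna : (-a) ∈ entriesHigh n k w)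
    (hmid : ∀ c : ℤ, b < c → c < a → c ∈ entriesHigh n k w) :
    ∃ w' : ℤ → ℤ, Grassmannian n k w' ∧
      entriesLow k w' = a ::ₘ (entriesLow k w).erase b ∧
      entriesHigh n k w' = (-b) ::ₘ (entriesHigh n k w).erase (-a) ∧
      Covers n w w' := by
  classical
  obtain ⟨⟨hbij, hodd, hfix⟩, hpos, hmlo, hmhi⟩ := hw
  have winj : Function.Injective w := hbij.1
  simp only [entriesLow, entriesHigh] at hbu hna
  obtain ⟨p, hpmem, wp⟩ := Multiset.mem_map.mp hbu
  obtain ⟨q, hqmem, wq⟩ := Multiset.mem_map.mp hna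
  rw [Finset.mem_val, Finset.mem_Icc] at hpmem hqmem
  have hp1 : 1 ≤ p := hpmem.1
  have hpk : p ≤ (k:ℤ) := hpmem.2
  have hkq : (k:ℤ) < q := by omega
  have hqn : q ≤ (n:ℤ) := hqmem.2
  have hpq : p < q := by omega
  have hpn : p ≤ (n:ℤ) := by omega
  have hp0 : 0 < p := by omega
  have hq0 : 0 < q := by omega
  have hwa : w (-q) = a := by rw [hodd q, wq]; ring
  have hwnb : w (-p) = -b := by rw [hodd p, wp]
  have hmid' : ∀ c : ℤ, b < c → c < a → ∃ j, (k:ℤ) < j ∧ j ≤ (n:ℤ) ∧ w j = c := by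
    intro c h1 h2
    obtain ⟨j, hj, hjw⟩ := Multiset.mem_map.mp (hmid c h1 h2)
    rw [Finset.mem_val, Finset.mem_Icc] at hj
    exact ⟨j, by omega, hj.2, hjw⟩
  have hgap_low : ∀ j, 0 < j → j ≤ (k:ℤ) → j ≠ p → w j < b ∨ a < w j := by
    intro j h0 hjk hjp
    rcases lt_trichotomy (w j) b with h|h|h
    · exact Or.inl h
    · exact absurd (winj (h.trans wp.symm)) hjp
    rcases lt_trichotomy (w j) a with h2|h2|h2
    · obtain ⟨jj, hjj1, _, hjj3⟩ := hmid' (w j) h h2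
      have : j = jj := winj hjj3.symm
      omega
    · have : j = -q := winj (h2.trans hwa.symm)
      omega
    · exact Or.inr h2
  have hgap_high : ∀ j, 0 < j → j ≠ q → w j < -a ∨ -b < w j := by
    intro j h0 hjq
    rcases lt_trichotomy (w j) (-a) with h|h|h
    · exact Or.inl h
    · exact absurd (winj (h.trans wq.symm)) hjq
    rcases lt_trichotomy (w j) (-b) with h2|h2|h2
    · obtain ⟨jj, hjj1, _, hjj3⟩ := hmid' (-(w j)) (by omega) (by omega)
      have : jj = -j := winj (hjj3.trans (hodd j).symm)
      omega
    · have : j = -p := winj (h2.trans hwnb.symm)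
      omega
    · exact Or.inr h2
  set t := rt p q with htdef
  set w' := w ∘ t with hw'def
  have hw'p : w' p = a := by show w (t p) = a; rw [htdef, rt_p, hwa]
  have hw'q : w' q = -b := by show w (t q) = -b; rw [htdef, rt_q p q hp0 hpq, hwnb]
  have hw'eq : ∀ m, 0 < m → m ≠ p → m ≠ q → w' m = w m := by
    intro m h0 h1 h2
    show w (t m) = w m
    rw [htdef, rt_fix p q m h1 (by omega) (by omega) h2]
  have tinvol : Function.Involutive t := by
    intro m; rw [htdef]; exact rt_invol p q hp0 hpq m
  have hw'sp : SignedPerm n w' := by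
    refine ⟨hbij.comp tinvol.bijective, fun i => ?_, fun i hi => ?_⟩
    · show w (t (-i)) = -(w (t i))
      rw [htdef, rt_odd p q hp0 hpq, hodd]
    · have h2 : (n:ℤ) < i ∨ i < -(n:ℤ) := by
        rcases le_or_gt 0 i with h|h
        · left; rwa [abs_of_nonneg h] at hi
        · right; rw [abs_of_neg h] at hi; omega
      show w (t i) = i
      rw [htdef, rt_fix p q i (by omega) (by omega) (by omega) (by omega)]
      exact hfix i hi
  -- the key pointwise inversion comparison
  have key : ∀ i j : ℤ, 1 ≤ i → i ≤ (n:ℤ) → 1 ≤ j → j ≤ (n:ℤ) →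
      ((i < j ∧ w' j < w' i) ↔
        ((i < j ∧ w j < w i) ∨ (i = p ∧ (k:ℤ) < j ∧ b < w j ∧ w j < a))) := by
    intro i j hi1 hin hj1 hjn
    by_cases hip : i = p
    · by_cases hjq : j = q
      · rw [hip, hjq, hw'p, hw'q, wp, wq]; omega
      · by_cases hjp : j = p
        · rw [hip, hjp, hw'p, wp]; omega
        · rw [hip, hw'p, hw'eq j (by omega) hjp hjq, wp]
          have hjb : w j ≠ b := fun h => hjp (winj (h.trans wp.symm))
          by_cases hjk : j ≤ (k:ℤ)
          · rcases hgap_low j (by omega) hjk hjp with h|h <;> omega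
          · omega
    · by_cases hiq : i = q
      · by_cases hjq : j = q
        · rw [hiq, hjq, hw'q, wq]; omega
        · by_cases hjp : j = p
          · rw [hiq, hjp, hw'q, hw'p, wq, wp]; omega
          · rw [hiq, hw'q, hw'eq j (by omega) hjp hjq, wq]
            rcases hgap_high j (by omega) hjq with h|h <;> omega
      · by_cases hjp : j = p
        · rw [hjp, hw'p, hw'eq i (by omega) hip hiq, wp]
          by_cases hilt : i < p
          · have h3 := hmlo i p hi1 hilt hpk
            rw [wp] at h3; omega
          · omega
        · by_cases hjq : j = q
          · rw [hjq, hw'q, hw'eq i (by omega) hip hiq, wq]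
            by_cases hik : i ≤ (k:ℤ)
            · have := hpos i hi1 hik; omega
            · by_cases hiq2 : i < q
              · have := hmhi i q (by omega) hiq2 hqn
                rw [wq] at this; omega
              · omega
          · rw [hw'eq i (by omega) hip hiq, hw'eq j (by omega) hjp hjq]
            omega
  -- inversion count
  have hinv : invCount n w' = invCount n w + (a - b - 1).toNat := by
    unfold invCount
    have hfil : ((Finset.Icc (1:ℤ) (n:ℤ) ×ˢ Finset.Icc (1:ℤ) (n:ℤ)).filter
        (fun pr => pr.1 < pr.2 ∧ w' pr.2 < w' pr.1)) =
        ((Finset.Icc (1:ℤ) (n:ℤ) ×ˢ Finset.Icc (1:ℤ) (n:ℤ)).filter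
        (fun pr => (pr.1 < pr.2 ∧ w pr.2 < w pr.1) ∨
          (pr.1 = p ∧ (k:ℤ) < pr.2 ∧ b < w pr.2 ∧ w pr.2 < a))) := by
      refine Finset.filter_congr (fun pr hpr => ?_)
      rw [Finset.mem_product, Finset.mem_Icc, Finset.mem_Icc] at hpr
      exact key pr.1 pr.2 hpr.1.1 hpr.1.2 hpr.2.1 hpr.2.2
    have hdisj : Disjoint
        ((Finset.Icc (1:ℤ) (n:ℤ) ×ˢ Finset.Icc (1:ℤ) (n:ℤ)).filter
          (fun pr => pr.1 < pr.2 ∧ w pr.2 < w pr.1))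
        ((Finset.Icc (1:ℤ) (n:ℤ) ×ˢ Finset.Icc (1:ℤ) (n:ℤ)).filter
          (fun pr => pr.1 = p ∧ (k:ℤ) < pr.2 ∧ b < w pr.2 ∧ w pr.2 < a)) := by
      rw [Finset.disjoint_left]
      intro pr h1 h2
      simp only [Finset.mem_filter] at h1 h2
      have e1 := h1.2.2
      have e2 := h2.2
      rw [e2.1, wp] at e1
      omega
    have hJ : ((Finset.Icc (1:ℤ) (n:ℤ) ×ˢ Finset.Icc (1:ℤ) (n:ℤ)).filter
        (fun pr => pr.1 = p ∧ (k:ℤ) < pr.2 ∧ b < w pr.2 ∧ w pr.2 < a)) =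
        ((Finset.Icc (1:ℤ) (n:ℤ)).filter
          (fun j => (k:ℤ) < j ∧ b < w j ∧ w j < a)).image (fun j => (p, j)) := by
      ext pr
      simp only [Finset.mem_filter, Finset.mem_product, Finset.mem_Icc, Finset.mem_image]
      constructor
      · rintro ⟨⟨_, hq'⟩, h1, h2, h3, h4⟩
        exact ⟨pr.2, ⟨hq', h2, h3, h4⟩, by rw [← h1]⟩
      · rintro ⟨j, ⟨⟨hj0, hj1⟩, hj2, hj3, hj4⟩, rfl⟩
        exact ⟨⟨⟨hp1, hpn⟩, hj0, hj1⟩, rfl, hj2, hj3, hj4⟩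
    have himg : ((Finset.Icc (1:ℤ) (n:ℤ)).filter
        (fun j => (k:ℤ) < j ∧ b < w j ∧ w j < a)).image w = Finset.Ioo b a := by
      ext c
      simp only [Finset.mem_image, Finset.mem_filter, Finset.mem_Icc, Finset.mem_Ioo]
      constructor
      · rintro ⟨j, ⟨_, _, h3, h4⟩, rfl⟩; exact ⟨h3, h4⟩
      · rintro ⟨h1, h2⟩
        obtain ⟨j, hj1, hj2, hj3⟩ := hmid' c h1 h2
        exact ⟨j, ⟨⟨by omega, hj2⟩, hj1, by rw [hj3]; exact h1, by rw [hj3]; exact h2⟩, hj3⟩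
    have hprodinj : Function.Injective (fun j : ℤ => (p, j)) := by
      intro x y h; simpa using h
    rw [hfil, Finset.filter_or, Finset.card_union_of_disjoint hdisj, hJ,
      Finset.card_image_of_injective _ hprodinj, ← Finset.card_image_of_injOn winj.injOn,
      himg, Int.card_Ioo]
  -- negative positions coincide
  have hNeq : (Finset.Icc (1:ℤ) (n:ℤ)).filter (fun j => w' j < 0) =
      (Finset.Icc (1:ℤ) (n:ℤ)).filter (fun j => w j < 0) := by
    refine Finset.filter_congr (fun j hj => ?_)
    rw [Finset.mem_Icc] at hj
    by_cases hjp : j = p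
    · rw [hjp, hw'p, wp]; omega
    · by_cases hjq : j = q
      · rw [hjq, hw'q, wq]; omega
      · rw [hw'eq j (by omega) hjp hjq]
  have hqI : q ∈ (Finset.Icc (1:ℤ) (n:ℤ)).filter (fun j => w j < 0) := by
    simp only [Finset.mem_filter, Finset.mem_Icc]
    exact ⟨⟨by omega, hqn⟩, by rw [wq]; omega⟩
  have e3 : ∑ j ∈ ((Finset.Icc (1:ℤ) (n:ℤ)).filter (fun j => w j < 0)).erase q, w' j =
      ∑ j ∈ ((Finset.Icc (1:ℤ) (n:ℤ)).filter (fun j => w j < 0)).erase q, w j := by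
    refine Finset.sum_congr rfl (fun j hj => ?_)
    have hjq : j ≠ q := Finset.ne_of_mem_erase hj
    have hj' := Finset.mem_of_mem_erase hj
    simp only [Finset.mem_filter, Finset.mem_Icc] at hj'
    have hjp : j ≠ p := by
      intro h; rw [h, wp] at hj'; omega
    exact hw'eq j (by omega) hjp hjq
  have hsum' : ∑ j ∈ (Finset.Icc (1:ℤ) (n:ℤ)).filter (fun j => w j < 0), w' j =
      (∑ j ∈ (Finset.Icc (1:ℤ) (n:ℤ)).filter (fun j => w j < 0), w j) + (a - b) := by
    rw [← Finset.add_sum_erase _ w' hqI, ← Finset.add_sum_erase _ w hqI, e3, hw'q, wq]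
    ring
  have hinv' : (invCount n w' : ℤ) = (invCount n w : ℤ) + (a - b - 1) := by
    rw [hinv]
    push_cast [Int.toNat_of_nonneg (show (0:ℤ) ≤ a - b - 1 by omega)]
    ring
  have hlen : len n w = len n w' + 1 := by
    unfold len
    rw [hNeq, hinv', hsum']
    ring
  -- assemble
  refine ⟨w', ⟨hw'sp, ?_, ?_, ?_⟩, ?_, ?_, t,
    (by rw [htdef]; exact rt_is_refl n p q hp1 hpq hqn), hw'def, hlen⟩
  · intro i h1 h2
    by_cases hip : i = p
    · rw [hip, hw'p]; omega
    · rw [hw'eq i (by omega) hip (by omega)]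
      exact hpos i h1 h2
  · intro i j h1 hij hjk
    by_cases hip : i = p
    · have hjp : j ≠ p := by omega
      rw [hip, hw'p, hw'eq j (by omega) hjp (by omega)]
      have h3 := hmlo p j hp1 (by omega) hjk
      rw [wp] at h3
      rcases hgap_low j (by omega) hjk hjp with h|h <;> omega
    · by_cases hjp : j = p
      · rw [hjp, hw'p, hw'eq i (by omega) hip (by omega)]
        have h3 := hmlo i p h1 (by omega) hpk
        rw [wp] at h3; omega
      · rw [hw'eq i (by omega) hip (by omega), hw'eq j (by omega) hjp (by omega)]
        exact hmlo i j h1 hij hjk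
  · intro i j hki hij hjn
    by_cases hiq : i = q
    · have hjq : j ≠ q := by omega
      rw [hiq, hw'q, hw'eq j (by omega) (by omega) hjq]
      have h3 := hmhi q j hkq (by omega) hjn
      rw [wq] at h3
      rcases hgap_high j (by omega) hjq with h|h <;> omega
    · by_cases hjq : j = q
      · rw [hjq, hw'q, hw'eq i (by omega) (by omega) hiq]
        have h3 := hmhi i q hki (by omega) hqn
        rw [wq] at h3; omega
      · rw [hw'eq i (by omega) (by omega) hiq, hw'eq j (by omega) (by omega) hjq]
        exact hmhi i j hki hij hjn
  · simp only [entriesLow]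
    rw [map_update_multiset _ (Finset.Icc (1:ℤ) (k:ℤ)).nodup w w' p
      (Finset.mem_val.mpr (Finset.mem_Icc.mpr ⟨hp1, hpk⟩))
      (fun x hx hxp => by
        rw [Finset.mem_val, Finset.mem_Icc] at hx
        exact hw'eq x (by omega) hxp (by omega)),
      hw'p, wp]
  · simp only [entriesHigh]
    rw [map_update_multiset _ (Finset.Icc ((k:ℤ)+1) (n:ℤ)).nodup w w' q
      (Finset.mem_val.mpr (Finset.mem_Icc.mpr ⟨by omega, hqn⟩))
      (fun x hx hxq => by
        rw [Finset.mem_val, Finset.mem_Icc] at hx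
        exact hw'eq x (by omega) (by omega) hxq),
      hw'q, wq]
end

section
/- Let w ∈ W_n^{(k)}, let a > 0 be an entry such that −a is an entry of w at a position > k, and suppose w' ∈ W_n^{(k)} has the same multiset of entries as w on positions ≤ k and on positions > k, except that −a is replaced by a among positions > k. Let p = #{i ∈ [1,k] : w(i) < a}. Then ℓ(w) = ℓ(w') + a + p. -/
/-- Finset filter card on positions equals multiset filter card on entries. -/
lemma aux_filter_card (s : Finset ℤ) (u : ℤ → ℤ) (P : ℤ → Prop) [DecidablePred P] :
    (s.filter (fun i => P (u i))).card = Multiset.card ((s.val.map u).filter P) := by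
  rw [Multiset.filter_map, Multiset.card_map]
  rfl

/-- Finset sum of `g ∘ u` equals multiset map-sum over entries. -/
lemma aux_sum_map (s : Finset ℤ) (u : ℤ → ℤ) (g : ℤ → ℕ) :
    ∑ i ∈ s, g (u i) = ((s.val.map u).map g).sum := by
  rw [Multiset.map_map]
  rfl

/-- Sum over filtered positions equals filtered multiset sum. -/
lemma aux_sum_filter (s : Finset ℤ) (u : ℤ → ℤ) :
    ∑ j ∈ s.filter (fun j => u j < 0), u j
      = ((s.val.map u).filter (fun x => x < 0)).sum := by
  rw [Multiset.filter_map]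
  show ((s.val.filter (fun j => u j < 0)).map u).sum = _
  rfl

/-- For a Grassmannian permutation, the inversion count is the sum over low entries
`v` of the number of high entries below `v`. -/
lemma aux_inv_eq (n k : ℕ) (u : ℤ → ℤ) (hu : Grassmannian n k u) :
    invCount n u =
      ((entriesLow k u).map
        (fun v => Multiset.card ((entriesHigh n k u).filter (fun x => x < v)))).sum := by
  obtain ⟨-, hpos, hlo, hhi⟩ := hu
  have hset : ((Finset.Icc (1 : ℤ) (n : ℤ) ×ˢ Finset.Icc (1 : ℤ) (n : ℤ)).filter
      (fun p => p.1 < p.2 ∧ u p.2 < u p.1))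
      = ((Finset.Icc (1 : ℤ) (k : ℤ) ×ˢ Finset.Icc ((k : ℤ) + 1) (n : ℤ)).filter
      (fun p => u p.2 < u p.1)) := by
    ext ⟨i, j⟩
    simp only [Finset.mem_filter, Finset.mem_product, Finset.mem_Icc]
    constructor
    · rintro ⟨⟨⟨hi1, hin⟩, hj1, hjn⟩, hij, hinv⟩
      have hjk : (k : ℤ) + 1 ≤ j := by
        by_contra h
        exact absurd (hlo i j hi1 hij (by omega)) (by omega)
      have hik : i ≤ (k : ℤ) := by
        by_contra h
        exact absurd (hhi i j (by omega) hij hjn) (by omega)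
      exact ⟨⟨⟨hi1, hik⟩, hjk, hjn⟩, hinv⟩
    · rintro ⟨⟨⟨hi1, hik⟩, hjk, hjn⟩, hinv⟩
      have hkn : (0 : ℤ) ≤ (k : ℤ) := Int.ofNat_nonneg k
      exact ⟨⟨⟨hi1, by omega⟩, by omega, hjn⟩, by omega, hinv⟩
  unfold invCount
  rw [hset, Finset.card_filter, Finset.sum_product]
  have hinner : ∀ i : ℤ,
      (∑ j ∈ Finset.Icc ((k : ℤ) + 1) (n : ℤ), if u j < u i then 1 else 0)
        = Multiset.card ((entriesHigh n k u).filter (fun x => x < u i)) := by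
    intro i
    rw [← Finset.card_filter]
    exact aux_filter_card _ u (fun x => x < u i)
  simp only [hinner]
  exact aux_sum_map (Finset.Icc (1 : ℤ) (k : ℤ)) u
    (fun v => Multiset.card ((entriesHigh n k u).filter (fun x => x < v)))

/-- For a Grassmannian permutation, the negative-entry sum is the sum of negative
high entries. -/
lemma aux_neg_eq (n k : ℕ) (u : ℤ → ℤ) (hu : Grassmannian n k u) :
    (∑ j ∈ (Finset.Icc (1 : ℤ) (n : ℤ)).filter (fun j => u j < 0), u j)
      = ((entriesHigh n k u).filter (fun x => x < 0)).sum := by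
  obtain ⟨-, hpos, hlo, hhi⟩ := hu
  have hset : (Finset.Icc (1 : ℤ) (n : ℤ)).filter (fun j => u j < 0)
      = (Finset.Icc ((k : ℤ) + 1) (n : ℤ)).filter (fun j => u j < 0) := by
    ext j
    simp only [Finset.mem_filter, Finset.mem_Icc]
    constructor
    · rintro ⟨⟨hj1, hjn⟩, hneg⟩
      refine ⟨⟨?_, hjn⟩, hneg⟩
      by_contra h
      exact absurd (hpos j hj1 (by omega)) (by omega)
    · rintro ⟨⟨hjk, hjn⟩, hneg⟩
      have hkn : (0 : ℤ) ≤ (k : ℤ) := Int.ofNat_nonneg k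
      exact ⟨⟨by omega, hjn⟩, hneg⟩
  rw [hset]
  exact aux_sum_filter _ u

/-- if `-a` (with `a > 0`) is an entry of `w` at a position `> k` and
`w' ∈ W_n^{(k)}` is obtained from `w` by replacing `-a` by `a` among positions `> k`,
then `ℓ(w) = ℓ(w') + a + p` where `p = #{i ∈ [1,k] : w i < a}`. -/
theorem stmt_10 (n k : ℕ) (hn : 1 ≤ n) (hk : k ≤ n) (w w' : ℤ → ℤ)
    (hw : Grassmannian n k w) (hw' : Grassmannian n k w')
    (a : ℤ) (ha : 0 < a) (hna : (-a) ∈ entriesHigh n k w)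
    (hlow : entriesLow k w' = entriesLow k w)
    (hhigh : entriesHigh n k w' = a ::ₘ (entriesHigh n k w).erase (-a)) :
    len n w = len n w' + a +
      (((Finset.Icc (1 : ℤ) (k : ℤ)).filter (fun i => w i < a)).card : ℤ) := by
  classical
  have hMa : (-a) ::ₘ (entriesHigh n k w).erase (-a) = entriesHigh n k w :=
    Multiset.cons_erase hna
  -- all low entries of w are positive
  have hLpos : ∀ v ∈ entriesLow k w, 0 < v := by
    intro v hv
    obtain ⟨i, hi, rfl⟩ := Multiset.mem_map.mp hv
    rw [Finset.mem_val, Finset.mem_Icc] at hi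
    exact hw.2.1 i hi.1 hi.2
  -- a is not a low entry of w
  have haL : a ∉ entriesLow k w := by
    intro haL
    have h1 : a ∈ entriesLow k w' := by rw [hlow]; exact haL
    have h2 : a ∈ entriesHigh n k w' := by
      rw [hhigh]; exact Multiset.mem_cons_self _ _
    obtain ⟨i, hi, hwi⟩ := Multiset.mem_map.mp h1
    obtain ⟨j, hj, hwj⟩ := Multiset.mem_map.mp h2
    have hij : i = j := hw'.1.1.1 (hwi.trans hwj.symm)
    rw [Finset.mem_val, Finset.mem_Icc] at hi hj
    omega
  -- pointwise comparison of the inversion counting functions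
  have hfe : ∀ v ∈ entriesLow k w,
      Multiset.card ((entriesHigh n k w).filter (fun x => x < v))
        = Multiset.card ((entriesHigh n k w').filter (fun x => x < v))
          + (if v < a then 1 else 0) := by
    intro v hv
    have hv0 : 0 < v := hLpos v hv
    have hva : v ≠ a := fun h => haL (h ▸ hv)
    rw [hhigh]
    conv_lhs => rw [← hMa]
    rw [Multiset.filter_cons_of_pos (p := fun x => x < v) _ (by omega),
      Multiset.card_cons]
    by_cases hav : a < v
    · rw [Multiset.filter_cons_of_pos (p := fun x => x < v) _ hav,
        Multiset.card_cons, if_neg (by omega : ¬ v < a)]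
    · rw [Multiset.filter_cons_of_neg (p := fun x => x < v) _ hav,
        if_pos (by omega : v < a)]
  -- summing indicators gives a filtered cardinality
  have hcardf : ∀ (t : Multiset ℤ),
      (t.map (fun v => if v < a then 1 else 0)).sum
        = Multiset.card (t.filter (fun v => v < a)) := by
    intro t
    induction t using Multiset.induction with
    | empty => simp
    | cons x s ih =>
      rw [Multiset.map_cons, Multiset.sum_cons, ih, Multiset.filter_cons]
      by_cases h : x < a <;> simp [h] <;> omega
  -- the inversion counts
  have hinv : invCount n w = invCount n w'
      + Multiset.card ((entriesLow k w).filter (fun v => v < a)) := by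
    rw [aux_inv_eq n k w hw, aux_inv_eq n k w' hw', hlow,
      Multiset.map_congr rfl hfe, Multiset.sum_map_add, hcardf]
  -- the negative sums
  have hns : (∑ j ∈ (Finset.Icc (1 : ℤ) (n : ℤ)).filter (fun j => w j < 0), w j)
      = -a + ∑ j ∈ (Finset.Icc (1 : ℤ) (n : ℤ)).filter (fun j => w' j < 0), w' j := by
    rw [aux_neg_eq n k w hw, aux_neg_eq n k w' hw', hhigh]
    conv_lhs => rw [← hMa]
    rw [Multiset.filter_cons_of_pos (p := fun x => x < 0) _ (by omega),
      Multiset.filter_cons_of_neg (p := fun x => x < 0) _ (by omega),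
      Multiset.sum_cons]
  -- p in multiset form
  have hp : ((Finset.Icc (1 : ℤ) (k : ℤ)).filter (fun i => w i < a)).card
      = Multiset.card ((entriesLow k w).filter (fun v => v < a)) :=
    aux_filter_card _ w (fun x => x < a)
  unfold len
  rw [hinv, hns, hp]
  push_cast
  ring
end

section
/- Let w, w' ∈ W_n^{(k)} be such that w covers w'. Then the pair (w,w') is of type B1 if and only if the dual pair ((w')∨, w∨) is of type B1. -/
lemma w0_low (n k : ℕ) (i : ℤ) (h1 : 1 ≤ i) (h2 : i ≤ (k : ℤ)) : w0 n k i = i := by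
  have : (k:ℤ) ≤ n → True := fun _ => trivial
  simp only [w0]; split_ifs <;> omega

lemma w0_odd (n k : ℕ) (hk : k ≤ n) (i : ℤ) : w0 n k (-i) = -w0 n k i := by
  have hk' : (k:ℤ) ≤ n := by exact_mod_cast hk
  simp only [w0]; split_ifs <;> omega

lemma w0_fix (n k : ℕ) (i : ℤ) (h : (n:ℤ) < |i|) : w0 n k i = i := by
  rw [lt_abs] at h
  simp only [w0]; split_ifs <;> omega

lemma w0_invol (n k : ℕ) (hk : k ≤ n) : Function.Involutive (w0 n k) := by
  intro i
  have hk' : (k:ℤ) ≤ n := by exact_mod_cast hk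
  simp only [w0]; split_ifs <;> omega

lemma w0_high (n k : ℕ) (i : ℤ) (h1 : (k:ℤ) < i) (h2 : i ≤ (n:ℤ)) :
    w0 n k i = -((n : ℤ) + (k : ℤ) + 1 - i) := by
  simp only [w0]; split_ifs <;> omega

lemma reindex (n k : ℕ) :
    (Finset.Icc ((k:ℤ)+1) (n:ℤ)).val.map (fun i => (n:ℤ)+(k:ℤ)+1-i)
      = (Finset.Icc ((k:ℤ)+1) (n:ℤ)).val := by
  have hinj : Function.Injective (fun i : ℤ => (n:ℤ)+(k:ℤ)+1-i) := fun a b h => by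
    simp only at h; omega
  have hE : Finset.map ⟨_, hinj⟩ (Finset.Icc ((k:ℤ)+1) (n:ℤ))
      = Finset.Icc ((k:ℤ)+1) (n:ℤ)  := by
    ext x
    simp only [Finset.mem_map, Finset.mem_Icc, Function.Embedding.coeFn_mk]
    constructor
    · rintro ⟨a, ha, rfl⟩; omega
    · intro h; exact ⟨(n:ℤ)+(k:ℤ)+1-x, by omega, by omega⟩
  calc (Finset.Icc ((k:ℤ)+1) (n:ℤ)).val.map (fun i => (n:ℤ)+(k:ℤ)+1-i)
      = (Finset.map ⟨_, hinj⟩ (Finset.Icc ((k:ℤ)+1) (n:ℤ))).val := rfl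
    _ = _ := by rw [hE]

lemma grass_dual (n k : ℕ) (hk : k ≤ n) (w : ℤ → ℤ) (hw : Grassmannian n k w) :
    Grassmannian n k (w ∘ w0 n k) := by
  obtain ⟨⟨hbij, hodd, hfix⟩, hpos, hinc, hinc2⟩ := hw
  refine ⟨⟨hbij.comp (w0_invol n k hk).bijective, fun i => ?_, fun i hi => ?_⟩,
      fun i h1 h2 => ?_, fun i j h1 h2 h3 => ?_, fun i j h1 h2 h3 => ?_⟩
  · show w (w0 n k (-i)) = -w (w0 n k i)
    rw [w0_odd n k hk, hodd]
  · show w (w0 n k i) = i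
    rw [w0_fix n k i hi]; exact hfix i hi
  · show 0 < w (w0 n k i)
    rw [w0_low n k i h1 h2]; exact hpos i h1 h2
  · show w (w0 n k i) < w (w0 n k j)
    rw [w0_low n k i h1 (by omega), w0_low n k j (by omega) h3]
    exact hinc i j h1 h2 h3
  · show w (w0 n k i) < w (w0 n k j)
    have hk' : (k:ℤ) ≤ n := by exact_mod_cast hk
    rw [w0_high n k i h1 (by omega), w0_high n k j (by omega) h3, hodd, hodd]
    have := hinc2 ((n:ℤ)+(k:ℤ)+1-j) ((n:ℤ)+(k:ℤ)+1-i) (by omega) (by omega) (by omega)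
    omega

lemma EL_dual (n k : ℕ) (w : ℤ → ℤ) :
    entriesLow k (w ∘ w0 n k) = entriesLow k w := by
  refine Multiset.map_congr rfl (fun i hi => ?_)
  rw [← Finset.mem_def, Finset.mem_Icc] at hi
  show w (w0 n k i) = w i
  rw [w0_low n k i hi.1 hi.2]

lemma EH_dual (n k : ℕ) (w : ℤ → ℤ) (hodd : ∀ i : ℤ, w (-i) = -w i) :
    entriesHigh n k (w ∘ w0 n k) = (entriesHigh n k w).map (fun x => -x) := by
  unfold entriesHigh
  rw [Multiset.map_map]
  conv_rhs => rw [← reindex n k, Multiset.map_map]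
  refine Multiset.map_congr rfl (fun i hi => ?_)
  rw [← Finset.mem_def, Finset.mem_Icc] at hi
  show w (w0 n k i) = -w ((n:ℤ)+(k:ℤ)+1-i)
  rw [w0_high n k i (by omega) hi.2]
  have := hodd ((n:ℤ)+(k:ℤ)+1-i)
  rw [show -((n:ℤ)+(k:ℤ)+1-i) = -((n:ℤ)+(k:ℤ)+1-i) from rfl]
  calc w (-((n:ℤ) + (k:ℤ) + 1 - i)) = -w ((n:ℤ)+(k:ℤ)+1-i) := this

lemma ms_aux (s t : Multiset ℤ) (h1 : (-1:ℤ) ∈ s) (h2 : t = 1 ::ₘ s.erase (-1)) :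
    (-1 : ℤ) ∈ t.map (fun x => -x) ∧
      s.map (fun x => -x) = 1 ::ₘ (t.map (fun x => -x)).erase (-1) := by
  constructor
  · rw [h2, Multiset.map_cons]
    exact Multiset.mem_cons_self _ _
  · conv_lhs => rw [← Multiset.cons_erase h1]
    rw [h2, Multiset.map_cons, Multiset.map_cons]
    congr 1
    exact (Multiset.erase_cons_head _ _).symm

lemma map_neg_neg (s : Multiset ℤ) : (s.map (fun x : ℤ => -x)).map (fun x => -x) = s := by
  rw [Multiset.map_map]; simp

/-- if `w` covers `w'`, then `(w, w')` is of type B1 iff the dual pair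
`((w')∨, w∨)` is of type B1. -/
theorem stmt_16 (n k : ℕ) (hn : 1 ≤ n) (hk : k ≤ n) (w w' : ℤ → ℤ)
    (hw : Grassmannian n k w) (hw' : Grassmannian n k w')
    (hcov : Covers n w w') :
    TypeB1 n k w w' ↔ TypeB1 n k (w' ∘ w0 n k) (w ∘ w0 n k) := by
  constructor
  · rintro ⟨-, -, h3, h4, h5⟩
    have h := ms_aux _ _ h3 h5
    refine ⟨grass_dual n k hk w' hw', grass_dual n k hk w hw, ?_, ?_, ?_⟩
    · rw [EH_dual n k w' hw'.1.2.1]; exact h.1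
    · rw [EL_dual, EL_dual]; exact h4.symm
    · rw [EH_dual n k w hw.1.2.1, EH_dual n k w' hw'.1.2.1]; exact h.2
  · rintro ⟨-, -, h3, h4, h5⟩
    rw [EH_dual n k w' hw'.1.2.1] at h3
    rw [EL_dual, EL_dual] at h4
    rw [EH_dual n k w hw.1.2.1, EH_dual n k w' hw'.1.2.1] at h5
    obtain ⟨g1, g2⟩ := ms_aux _ _ h3 h5
    rw [map_neg_neg] at g1
    rw [map_neg_neg, map_neg_neg] at g2
    exact ⟨hw, hw', g1, h4.symm, g2⟩
end
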